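/- Let A and B be bounded self-adjoint operators on a Hilbert space and let σ and Δ be Borel subsets of ℝ such that the convex hull of σ does not intersect Δ, or the convex hull of Δ does not intersect σ. Then dist(σ, Δ)·‖E_A(σ)·E_B(Δ)‖ ≤ ‖A − B‖. -/

import Mathlib

/-- `E` is the projection-valued spectral measure of the bounded self-adjoint operator `T`
on the complex Hilbert space `H`: each `E Δ` (for Borel `Δ ⊆ ℝ`) is an orthogonal
projection, `E` is multiplicative and countably additive (in the strong sense), `E ℝ = 1`,
each `E Δ` commutes with `T`, and on the range of `E Δ` the operator `T` has its
approximate point spectrum inside the closure of `Δ` (which uniquely characterizes the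
spectral measure of `T`). -/
structure IsSpectralMeasure {H : Type*} [NormedAddCommGroup H] [InnerProductSpace ℂ H]
    [CompleteSpace H] (T : H →L[ℂ] H) (E : Set ℝ → H →L[ℂ] H) : Prop where
  isSelfAdjoint : ∀ Δ : Set ℝ, MeasurableSet Δ → IsSelfAdjoint (E Δ)
  map_inter : ∀ Δ₁ Δ₂ : Set ℝ, MeasurableSet Δ₁ → MeasurableSet Δ₂ →
    E Δ₁ * E Δ₂ = E (Δ₁ ∩ Δ₂)
  map_univ : E Set.univ = 1
  countably_additive : ∀ Δ : ℕ → Set ℝ, (∀ n, MeasurableSet (Δ n)) →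
    Pairwise (Function.onFun Disjoint Δ) →
    ∀ x : H, HasSum (fun n => E (Δ n) x) (E (⋃ n, Δ n) x)
  commutes : ∀ Δ : Set ℝ, MeasurableSet Δ → Commute T (E Δ)
  spectrum_loc : ∀ Δ : Set ℝ, MeasurableSet Δ → ∀ x : H, E Δ x = x →
    ∀ μ : ℝ, Metric.infDist μ Δ * ‖x‖ ≤ ‖T x - (μ : ℂ) • x‖

namespace SpectralAux

open Metric Set ContinuousLinearMap

set_option linter.unusedSectionVars false

variable {H : Type*} [NormedAddCommGroup H] [InnerProductSpace ℂ H] [CompleteSpace H]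

lemma ism_empty {T : H →L[ℂ] H} {E : Set ℝ → H →L[ℂ] H} (hE : IsSpectralMeasure T E) :
    E ∅ = 0 := by
  ext x
  have h := hE.countably_additive (fun _ => ∅) (fun _ => MeasurableSet.empty)
    (fun i j _ => disjoint_bot_left) x
  simp only [Set.iUnion_empty] at h
  have h0 : Filter.Tendsto (fun _ : ℕ => E ∅ x) Filter.atTop (nhds 0) :=
    h.summable.tendsto_atTop_zero
  have h1 : Filter.Tendsto (fun _ : ℕ => E ∅ x) Filter.atTop (nhds (E ∅ x)) :=
    tendsto_const_nhds
  simpa using tendsto_nhds_unique h1 h0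

lemma ism_union {T : H →L[ℂ] H} {E : Set ℝ → H →L[ℂ] H} (hE : IsSpectralMeasure T E)
    {s t : Set ℝ} (hs : MeasurableSet s) (ht : MeasurableSet t) (hd : Disjoint s t) :
    E (s ∪ t) = E s + E t := by
  ext x
  classical
  set f : ℕ → Set ℝ := fun n => if n = 0 then s else if n = 1 then t else ∅ with hf
  have hmeas : ∀ n, MeasurableSet (f n) := by
    intro n; simp only [hf]; split_ifs <;> [exact hs; exact ht; exact MeasurableSet.empty]
  have hpw : Pairwise (Function.onFun Disjoint f) := by
    intro i j hij
    simp only [Function.onFun, hf]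
    split_ifs <;> first
      | omega
      | exact hd
      | exact hd.symm
      | exact Set.disjoint_empty _
      | exact Set.empty_disjoint _
  have h := hE.countably_additive f hmeas hpw x
  have hU : (⋃ n, f n) = s ∪ t := by
    apply Set.Subset.antisymm
    · intro y hy
      rcases Set.mem_iUnion.mp hy with ⟨n, hn⟩
      simp only [hf] at hn
      split_ifs at hn with h1 h2
      · exact Or.inl hn
      · exact Or.inr hn
      · exact absurd hn (Set.notMem_empty y)
    · intro y hy
      rcases hy with hy | hy
      · exact Set.mem_iUnion.mpr ⟨0, by simp [hf, hy]⟩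
      · exact Set.mem_iUnion.mpr ⟨1, by simp [hf, hy]⟩
  rw [hU] at h
  have h2 : HasSum (fun n => E (f n) x) (∑ n ∈ ({0, 1} : Finset ℕ), E (f n) x) := by
    apply hasSum_sum_of_ne_finset_zero
    intro n hn
    simp only [Finset.mem_insert, Finset.mem_singleton, not_or] at hn
    simp [hf, hn.1, hn.2, ism_empty hE]
  have h3 := h.unique h2
  simp only [ContinuousLinearMap.add_apply]
  rw [h3]
  norm_num [hf]

/-- Spectral projection of a set far outside the norm bound vanishes. -/
lemma ism_far {T : H →L[ℂ] H} {E : Set ℝ → H →L[ℂ] H} (hE : IsSpectralMeasure T E)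
    {s : Set ℝ} (hs : MeasurableSet s) (hfar : ∀ y ∈ s, ‖T‖ + 1 ≤ |y|) :
    E s = 0 := by
  rcases s.eq_empty_or_nonempty with rfl | hne
  · exact ism_empty hE
  ext z
  have hx : E s (E s z) = E s z := by
    have h := hE.map_inter s s hs hs
    calc E s (E s z) = (E s * E s) z := rfl
      _ = E s z := by rw [h, Set.inter_self]
  set x := E s z with hxdef
  have hloc := hE.spectrum_loc s hs x hx 0
  have hdist : ‖T‖ + 1 ≤ infDist 0 s := by
    by_contra hlt
    push_neg at hlt
    rcases (infDist_lt_iff hne).mp hlt with ⟨y, hy, hdy⟩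
    have := hfar y hy
    rw [Real.dist_eq] at hdy
    simp only [zero_sub, abs_neg] at hdy
    linarith
  simp only [Complex.ofReal_zero, zero_smul, sub_zero] at hloc
  have h1 : (‖T‖ + 1) * ‖x‖ ≤ infDist 0 s * ‖x‖ :=
    mul_le_mul_of_nonneg_right hdist (norm_nonneg _)
  have h2 : ‖T x‖ ≤ ‖T‖ * ‖x‖ := T.le_opNorm x
  have h3 : ‖x‖ ≤ 0 := by nlinarith [norm_nonneg x]
  have h4 : x = 0 := norm_le_zero_iff.mp h3
  simpa [hxdef] using h4

lemma expand_sq (T : H →L[ℂ] H) (v : H) (μ : ℝ) :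
    ‖T v - (μ:ℂ) • v‖^2 = ‖T v‖^2 - 2*μ*(inner ℂ v (T v) : ℂ).re + μ^2 * ‖v‖^2 := by
  rw [norm_sub_sq (𝕜 := ℂ)]
  have h3 : (inner ℂ (T v) ((μ:ℂ) • v) : ℂ).re = μ * (inner ℂ v (T v) : ℂ).re := by
    rw [inner_smul_right]
    simp only [Complex.mul_re, Complex.ofReal_re, Complex.ofReal_im, zero_mul, sub_zero]
    congr 1
    rw [← inner_conj_symm v (T v), Complex.conj_re]
  have h4 : ‖(μ:ℂ) • v‖^2 = μ^2 * ‖v‖^2 := by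
    rw [norm_smul, mul_pow]
    norm_num [sq_abs]
  simp only [RCLike.re_to_complex] at *
  rw [h3, h4]
  ring

lemma quad_bound {T : H →L[ℂ] H} {E : Set ℝ → H →L[ℂ] H} (hE : IsSpectralMeasure T E)
    {s : Set ℝ} (hs : MeasurableSet s) (hne : s.Nonempty) {a b : ℝ}
    (hab : ∀ y ∈ s, a ≤ y ∧ y ≤ b)
    {v : H} (hv : E s v = v) :
    a * ‖v‖^2 ≤ (inner ℂ v (T v) : ℂ).re ∧ (inner ℂ v (T v) : ℂ).re ≤ b * ‖v‖^2 := by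
  set t := (inner ℂ v (T v) : ℂ).re with ht
  set n := ‖v‖^2 with hn
  have hn0 : 0 ≤ n := sq_nonneg _
  have hkey : ∀ μ : ℝ, (infDist μ s)^2 * n ≤ ‖T v‖^2 - 2*μ*t + μ^2 * n := by
    intro μ
    have h1 := hE.spectrum_loc s hs v hv μ
    have h2 : (infDist μ s * ‖v‖)^2 ≤ ‖T v - (μ:ℂ) • v‖^2 :=
      pow_le_pow_left₀ (mul_nonneg infDist_nonneg (norm_nonneg _)) h1 2
    rw [expand_sq] at h2
    calc (infDist μ s)^2 * n = (infDist μ s * ‖v‖)^2 := by rw [mul_pow, hn]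
      _ ≤ _ := h2
  constructor
  · by_contra hcon
    push_neg at hcon
    set ε := a * n - t with hε
    have hε0 : 0 < ε := by simp [hε]; linarith
    set K := ‖T v‖^2 - a^2 * n with hK
    have hkey2 : ∀ μ : ℝ, μ < a → 2*μ*(t - a*n) ≤ K := by
      intro μ hμ
      have hd : a - μ ≤ infDist μ s := by
        by_contra hlt
        push_neg at hlt
        rcases (infDist_lt_iff hne).mp hlt with ⟨y, hy, hdy⟩
        rw [Real.dist_eq] at hdy
        have h5 := (hab y hy).1
        rcases abs_lt.mp hdy with ⟨h6, h7⟩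
        linarith
      have hd2 : (a - μ)^2 * n ≤ (infDist μ s)^2 * n := by
        apply mul_le_mul_of_nonneg_right _ hn0
        exact pow_le_pow_left₀ (by linarith) hd 2
      have := hkey μ
      nlinarith
    set μ := min (a - 1) (-(K/(2*ε)) - 1) with hμdef
    have hμa : μ < a := lt_of_le_of_lt (min_le_left _ _) (by linarith)
    have hμ2 : μ ≤ -(K/(2*ε)) - 1 := min_le_right _ _
    have h8 : K < (-μ) * (2*ε) := by
      have h9 : K/(2*ε) < -μ := by linarith
      calc K = (K/(2*ε)) * (2*ε) := by field_simp
        _ < (-μ) * (2*ε) := by apply mul_lt_mul_of_pos_right h9; linarith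
    have h9 := hkey2 μ hμa
    have h10 : 2*μ*(t - a*n) = (-μ) * (2*ε) := by rw [hε]; ring
    linarith
  · by_contra hcon
    push_neg at hcon
    set ε := t - b * n with hε
    have hε0 : 0 < ε := by simp [hε]; linarith
    set K := ‖T v‖^2 - b^2 * n with hK
    have hkey2 : ∀ μ : ℝ, b < μ → 2*μ*(t - b*n) ≤ K := by
      intro μ hμ
      have hd : μ - b ≤ infDist μ s := by
        by_contra hlt
        push_neg at hlt
        rcases (infDist_lt_iff hne).mp hlt with ⟨y, hy, hdy⟩
        rw [Real.dist_eq] at hdy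
        have h5 := (hab y hy).2
        rcases abs_lt.mp hdy with ⟨h6, h7⟩
        linarith
      have hd2 : (μ - b)^2 * n ≤ (infDist μ s)^2 * n := by
        apply mul_le_mul_of_nonneg_right _ hn0
        exact pow_le_pow_left₀ (by linarith) hd 2
      have := hkey μ
      nlinarith
    set μ := max (b + 1) (K/(2*ε) + 1) with hμdef
    have hμb : b < μ := lt_of_lt_of_le (by linarith) (le_max_left _ _)
    have hμ2 : K/(2*ε) + 1 ≤ μ := le_max_right _ _
    have h8 : K < μ * (2*ε) := by
      have h9 : K/(2*ε) < μ := by linarith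
      calc K = (K/(2*ε)) * (2*ε) := by field_simp
        _ < μ * (2*ε) := by apply mul_lt_mul_of_pos_right h9; linarith
    have h9 := hkey2 μ hμb
    have h10 : 2*μ*(t - b*n) = μ * (2*ε) := by rw [hε]; ring
    linarith

lemma norm_apply_le_on_range {T P : H →L[ℂ] H} (hT : IsSelfAdjoint T)
    (hcomm : T * P = P * T) (hidem : ∀ z : H, P (P z) = P z) {r : ℝ} (hr : 0 ≤ r)
    (hquad : ∀ w : H, P w = w → |(inner ℂ w (T w) : ℂ).re| ≤ r * ‖w‖^2)
    {v : H} (hv : P v = v) : ‖T v‖ ≤ r * ‖v‖ := by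
  by_cases hTv : T v = 0
  · rw [hTv, norm_zero]
    positivity
  have hvne : v ≠ 0 := by
    rintro rfl
    simp at hTv
  have hTvn : 0 < ‖T v‖ := norm_pos_iff.mpr hTv
  have hvn : 0 < ‖v‖ := norm_pos_iff.mpr hvne
  have hadj : ContinuousLinearMap.adjoint T = T := hT.adjoint_eq
  set c : ℂ := ((‖v‖ / ‖T v‖ : ℝ) : ℂ) with hc
  set w : H := c • T v with hw
  have hPTv : P (T v) = T v := by
    have h1 : T (P v) = P (T v) := congrArg (fun f => f v) hcomm
    rw [hv] at h1
    exact h1.symm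
  have hPw : P w = w := by rw [hw, map_smul, hPTv]
  have hnw : ‖w‖ = ‖v‖ := by
    rw [hw, norm_smul, hc]
    simp only [Complex.norm_real, Real.norm_eq_abs, abs_div, abs_norm]
    field_simp
  have hre : (inner ℂ v (T w) : ℂ).re = (inner ℂ w (T v) : ℂ).re := by
    have h0 := ContinuousLinearMap.adjoint_inner_left T w v
    rw [hadj] at h0
    have h1 : (inner ℂ v (T w) : ℂ) = inner ℂ (T v) w := h0.symm
    rw [h1, ← inner_conj_symm w (T v), Complex.conj_re]
  have hexp : (inner ℂ (v+w) (T (v+w)) : ℂ).re - (inner ℂ (v-w) (T (v-w)) : ℂ).re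
      = 4 * (inner ℂ w (T v) : ℂ).re := by
    simp only [map_add, map_sub, inner_add_left, inner_add_right, inner_sub_left,
      inner_sub_right, Complex.add_re, Complex.sub_re]
    rw [← hre]
    ring
  have hwtv : (inner ℂ w (T v) : ℂ).re = ‖v‖ * ‖T v‖ := by
    rw [hw, inner_smul_left, hc]
    simp only [Complex.conj_ofReal]
    rw [inner_self_eq_norm_sq_to_K (𝕜 := ℂ)]
    norm_cast
    field_simp
    simp only [Complex.mul_re, Complex.ofReal_re, Complex.ofReal_im, mul_zero, sub_zero]
    change ‖v‖ / ‖T v‖ * (‖T v‖ ^ 2) - 0 * 0 = ‖v‖ * ‖T v‖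
    rw [zero_mul, sub_zero, div_mul_eq_mul_div, div_eq_iff hTvn.ne']
    ring
  have hb1 : (inner ℂ (v+w) (T (v+w)) : ℂ).re ≤ r * ‖v+w‖^2 := by
    have := hquad (v+w) (by rw [map_add, hv, hPw])
    exact (abs_le.mp this).2
  have hb2 : -(r * ‖v-w‖^2) ≤ (inner ℂ (v-w) (T (v-w)) : ℂ).re := by
    have := hquad (v-w) (by rw [map_sub, hv, hPw])
    exact (abs_le.mp this).1
  have hpar := parallelogram_law_with_norm ℂ v w
  have hfin : 4 * (‖v‖ * ‖T v‖) ≤ 4 * (r * ‖v‖^2) := by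
    have h1 : 4 * (‖v‖ * ‖T v‖) ≤ r * (‖v+w‖^2 + ‖v-w‖^2) := by
      rw [← hwtv, ← hexp]
      have hx : r * (‖v+w‖^2 + ‖v-w‖^2) = r * ‖v+w‖^2 + r * ‖v-w‖^2 := by ring
      linarith [hb1, hb2]
    have h2 : ‖v+w‖^2 + ‖v-w‖^2 = 2*(‖v‖^2 + ‖w‖^2) := by
      rw [sq, sq, sq, sq]; linarith [hpar]
    rw [h2, hnw] at h1
    have h3 : r * (2 * (‖v‖^2 + ‖v‖^2)) = 4 * (r * ‖v‖^2) := by ring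
    linarith
  nlinarith

lemma proj_contract {P : H →L[ℂ] H} (hsa : IsSelfAdjoint P)
    (hidem : ∀ z : H, P (P z) = P z) (z : H) : ‖P z‖ ≤ ‖z‖ := by
  have hadj : ContinuousLinearMap.adjoint P = P := hsa.adjoint_eq
  have h0 := ContinuousLinearMap.adjoint_inner_left P (P z) z
  rw [hadj, hidem] at h0
  have h1 : (‖P z‖ : ℝ)^2 = (inner ℂ z (P z) : ℂ).re := by
    rw [← h0, inner_self_eq_norm_sq_to_K (𝕜 := ℂ)]
    norm_cast
  have h2 : (inner ℂ z (P z) : ℂ).re ≤ ‖z‖ * ‖P z‖ := by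
    calc (inner ℂ z (P z) : ℂ).re ≤ ‖(inner ℂ z (P z) : ℂ)‖ := Complex.re_le_norm _
      _ = ‖(inner ℂ z (P z) : ℂ)‖ := rfl
      _ ≤ ‖z‖ * ‖P z‖ := norm_inner_le_norm _ _
  nlinarith [norm_nonneg (P z), norm_nonneg z]

lemma core {A B : H →L[ℂ] H} (hA : IsSelfAdjoint A) (hB : IsSelfAdjoint B)
    {σ Δ : Set ℝ} (hσ : MeasurableSet σ) (hΔ : MeasurableSet Δ)
    (hσne : σ.Nonempty) (hΔne : Δ.Nonempty) (hbddB : BddBelow σ) (hbddA : BddAbove σ)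
    (hdisj : Disjoint (convexHull ℝ σ) Δ)
    {EA EB : Set ℝ → H →L[ℂ] H} (hEA : IsSpectralMeasure A EA) (hEB : IsSpectralMeasure B EB) :
    sInf (Set.image2 dist σ Δ) * ‖EA σ * EB Δ‖ ≤ ‖A - B‖ := by
  have hbdd0 : ∀ x ∈ Set.image2 dist σ Δ, (0:ℝ) ≤ x := by
    rintro x ⟨s, hs, t, ht, rfl⟩; exact dist_nonneg
  set d := sInf (Set.image2 dist σ Δ) with hd
  have hdnn : 0 ≤ d := Real.sInf_nonneg hbdd0
  rcases eq_or_lt_of_le hdnn with h0 | hdpos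
  · rw [← h0, zero_mul]; exact norm_nonneg _
  set a := sInf σ with ha
  set b := sSup σ with hb'
  have ha_le : ∀ y ∈ σ, a ≤ y := fun y hy => csInf_le hbddB hy
  have hb_le : ∀ y ∈ σ, y ≤ b := fun y hy => le_csSup hbddA hy
  have hab : a ≤ b := by
    obtain ⟨y, hy⟩ := hσne
    exact le_trans (ha_le y hy) (hb_le y hy)
  set c := (a + b) / 2 with hc
  set r := (b - a) / 2 with hr'
  have hr : 0 ≤ r := by rw [hr']; linarith
  set P := EA σ with hP
  set Q := EB Δ with hQ
  have hPsa : IsSelfAdjoint P := hEA.isSelfAdjoint σ hσ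
  have hQsa : IsSelfAdjoint Q := hEB.isSelfAdjoint Δ hΔ
  have hPP : P * P = P := by rw [hP, hEA.map_inter σ σ hσ hσ, Set.inter_self]
  have hQQ : Q * Q = Q := by rw [hQ, hEB.map_inter Δ Δ hΔ hΔ, Set.inter_self]
  have hPidem : ∀ z : H, P (P z) = P z := by
    intro z
    calc P (P z) = (P * P) z := rfl
      _ = P z := by rw [hPP]
  have hQidem : ∀ z : H, Q (Q z) = Q z := by
    intro z
    calc Q (Q z) = (Q * Q) z := rfl
      _ = Q z := by rw [hQQ]
  have hcomA : A * P = P * A := hEA.commutes σ hσ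
  have hcomB : B * Q = Q * B := hEB.commutes Δ hΔ
  -- separation
  have hsep : ∀ lam ∈ Δ, r + d ≤ |c - lam| := by
    intro lam hlam
    have hnotin : lam ∉ convexHull ℝ σ := fun h => Set.disjoint_left.mp hdisj h hlam
    have hcase : lam ≤ a ∨ b ≤ lam := by
      by_contra hcon
      push_neg at hcon
      obtain ⟨h1, h2⟩ := hcon
      obtain ⟨s1, hs1, hs1lt⟩ := exists_lt_of_csInf_lt hσne h1
      obtain ⟨s2, hs2, hs2gt⟩ := exists_lt_of_lt_csSup hσne h2
      apply hnotin
      have hseg := (convex_convexHull ℝ σ).segment_subset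
        (subset_convexHull ℝ σ hs1) (subset_convexHull ℝ σ hs2)
      apply hseg
      rw [segment_eq_Icc (le_of_lt (lt_trans hs1lt hs2gt))]
      exact ⟨le_of_lt hs1lt, le_of_lt hs2gt⟩
    rcases hcase with hle | hge
    · have h3 : lam + d ≤ a := by
        apply le_csInf hσne
        intro y hy
        have h4 : d ≤ dist y lam :=
          csInf_le ⟨0, hbdd0⟩ (Set.mem_image2_of_mem hy hlam)
        rw [Real.dist_eq, abs_of_nonneg (by linarith [ha_le y hy])] at h4
        linarith
      rw [abs_of_nonneg (by rw [hc]; linarith)]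
      rw [hc, hr']
      linarith
    · have h3 : b + d ≤ lam := by
        have h5 : b ≤ lam - d := by
          apply csSup_le hσne
          intro y hy
          have h4 : d ≤ dist y lam :=
            csInf_le ⟨0, hbdd0⟩ (Set.mem_image2_of_mem hy hlam)
          rw [Real.dist_eq, abs_of_nonpos (by linarith [hb_le y hy])] at h4
          linarith
        linarith
      rw [abs_of_nonpos (by rw [hc]; linarith)]
      rw [hc, hr']
      linarith
  have hinf : r + d ≤ infDist c Δ := by
    by_contra hlt
    push_neg at hlt
    rcases (infDist_lt_iff hΔne).mp hlt with ⟨y, hy, hdy⟩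
    rw [Real.dist_eq] at hdy
    linarith [hsep y hy]
  -- lower bound on range of Q
  have hlow : ∀ u : H, Q u = u → (r + d) * ‖u‖ ≤ ‖B u - (c:ℂ) • u‖ := by
    intro u hu
    have h1 := hEB.spectrum_loc Δ hΔ u hu c
    exact le_trans (mul_le_mul_of_nonneg_right hinf (norm_nonneg _)) h1
  -- the operators T and S
  have hCsa : IsSelfAdjoint ((c:ℂ) • (1 : H →L[ℂ] H)) := by
    rw [IsSelfAdjoint, star_smul, star_one, Complex.star_def, Complex.conj_ofReal]
  set T : H →L[ℂ] H := A - (c:ℂ) • 1 with hT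
  set S : H →L[ℂ] H := B - (c:ℂ) • 1 with hS
  have hTsa : IsSelfAdjoint T := hA.sub hCsa
  have hSsa : IsSelfAdjoint S := hB.sub hCsa
  have hCP : ((c:ℂ) • (1 : H →L[ℂ] H)) * P = P * ((c:ℂ) • 1) := by
    rw [smul_mul_assoc, one_mul, mul_smul_comm, mul_one]
  have hCQ : ((c:ℂ) • (1 : H →L[ℂ] H)) * Q = Q * ((c:ℂ) • 1) := by
    rw [smul_mul_assoc, one_mul, mul_smul_comm, mul_one]
  have hTP : T * P = P * T := by rw [hT, sub_mul, mul_sub, hcomA, hCP]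
  have hSQ : S * Q = Q * S := by rw [hS, sub_mul, mul_sub, hcomB, hCQ]
  -- quadratic bound on range of P
  have hquad : ∀ w : H, P w = w → |(inner ℂ w (T w) : ℂ).re| ≤ r * ‖w‖^2 := by
    intro w hw
    have h1 := quad_bound hEA hσ hσne (fun y hy => ⟨ha_le y hy, hb_le y hy⟩) hw
    have h2 : (inner ℂ w (T w) : ℂ).re = (inner ℂ w (A w) : ℂ).re - c * ‖w‖^2 := by
      have h3 : T w = A w - (c:ℂ) • w := by
        rw [hT]; simp [ContinuousLinearMap.sub_apply]
      have h4 : (inner ℂ w ((c:ℂ) • w) : ℂ).re = c * ‖w‖^2 := by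
        rw [inner_smul_right, inner_self_eq_norm_sq_to_K (𝕜 := ℂ)]
        rw [← RCLike.re_to_complex, ← RCLike.ofReal_pow]
        simp only [RCLike.mul_re, RCLike.ofReal_re, RCLike.ofReal_im, mul_zero, sub_zero,
          RCLike.re_to_complex, Complex.ofReal_re]
      rw [h3, inner_sub_right, Complex.sub_re, h4]
    rw [h2, abs_le]
    constructor
    · rw [hc, hr']; nlinarith [h1.1, sq_nonneg ‖w‖]
    · rw [hc, hr']; nlinarith [h1.2, sq_nonneg ‖w‖]
  have hTnorm : ∀ w : H, P w = w → ‖T w‖ ≤ r * ‖w‖ :=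
    fun w hw => norm_apply_le_on_range hTsa hTP hPidem hr hquad hw
  -- the Sylvester-type identity
  have h_assoc1 : T * (P * Q) = P * (T * Q) := by rw [← mul_assoc, hTP, mul_assoc]
  have h_assoc2 : (P * Q) * S = P * (S * Q) := by rw [mul_assoc, ← hSQ]
  have hid : T * (P * Q) - (P * Q) * S = P * ((A - B) * Q) := by
    rw [h_assoc1, h_assoc2, ← mul_sub, ← sub_mul]
    congr 2
    rw [hT, hS]
    exact sub_sub_sub_cancel_right A B _
  have hid2 : (P * Q) * S = T * (P * Q) - P * ((A - B) * Q) := by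
    rw [← hid, sub_sub_cancel]
  -- norm identities via star
  have hQP_norm : ‖Q * P‖ = ‖P * Q‖ := by
    have h1 : star (P * Q) = Q * P := by rw [star_mul, hPsa.star_eq, hQsa.star_eq]
    rw [← h1, norm_star]
  have hSQP_norm : ‖S * (Q * P)‖ = ‖(P * Q) * S‖ := by
    have h1 : star ((P * Q) * S) = S * (Q * P) := by
      rw [star_mul, star_mul, hPsa.star_eq, hQsa.star_eq, hSsa.star_eq]
    rw [← h1, norm_star]
  -- lower bound for S * (Q * P)
  have hrd : 0 < r + d := by linarith
  have h2norm : (r + d) * ‖Q * P‖ ≤ ‖S * (Q * P)‖ := by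
    have hpt : ∀ y : H, ‖(Q * P) y‖ ≤ (‖S * (Q * P)‖ / (r + d)) * ‖y‖ := by
      intro y
      have hu : Q ((Q * P) y) = (Q * P) y := by
        show Q (Q (P y)) = Q (P y)
        exact hQidem (P y)
      have h5 := hlow ((Q * P) y) hu
      have hSapp : (S * (Q * P)) y = B ((Q * P) y) - (c:ℂ) • ((Q * P) y) := by
        rw [hS]
        simp [ContinuousLinearMap.mul_apply, ContinuousLinearMap.sub_apply]
      have h6 : ‖(S * (Q * P)) y‖ ≤ ‖S * (Q * P)‖ * ‖y‖ := le_opNorm _ y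
      rw [hSapp] at h6
      rw [div_mul_eq_mul_div, le_div_iff₀ hrd, mul_comm]
      linarith
    have h7 := opNorm_le_bound _ (by positivity) hpt
    rw [le_div_iff₀ hrd] at h7
    linarith [h7]
  have hTXnorm : ‖T * (P * Q)‖ ≤ r * ‖P * Q‖ := by
    apply opNorm_le_bound _ (mul_nonneg hr (norm_nonneg _))
    intro x
    have hPx : P ((P * Q) x) = (P * Q) x := by
      show P (P (Q x)) = P (Q x)
      exact hPidem (Q x)
    calc ‖(T * (P * Q)) x‖ = ‖T ((P * Q) x)‖ := rfl
      _ ≤ r * ‖(P * Q) x‖ := hTnorm _ hPx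
      _ ≤ r * (‖P * Q‖ * ‖x‖) := mul_le_mul_of_nonneg_left (le_opNorm _ x) hr
      _ = r * ‖P * Q‖ * ‖x‖ := by ring
  have hYnorm : ‖P * ((A - B) * Q)‖ ≤ ‖A - B‖ := by
    apply opNorm_le_bound _ (norm_nonneg _)
    intro x
    calc ‖(P * ((A - B) * Q)) x‖ = ‖P ((A - B) (Q x))‖ := rfl
      _ ≤ ‖(A - B) (Q x)‖ := proj_contract hPsa hPidem _
      _ ≤ ‖A - B‖ * ‖Q x‖ := le_opNorm _ _
      _ ≤ ‖A - B‖ * ‖x‖ :=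
        mul_le_mul_of_nonneg_left (proj_contract hQsa hQidem x) (norm_nonneg _)
  have hchain : (r + d) * ‖P * Q‖ ≤ r * ‖P * Q‖ + ‖A - B‖ := by
    calc (r + d) * ‖P * Q‖ = (r + d) * ‖Q * P‖ := by rw [hQP_norm]
      _ ≤ ‖S * (Q * P)‖ := h2norm
      _ = ‖(P * Q) * S‖ := hSQP_norm
      _ = ‖T * (P * Q) - P * ((A - B) * Q)‖ := by rw [hid2]
      _ ≤ ‖T * (P * Q)‖ + ‖P * ((A - B) * Q)‖ := norm_sub_le _ _
      _ ≤ r * ‖P * Q‖ + ‖A - B‖ := add_le_add hTXnorm hYnorm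
  nlinarith [norm_nonneg (P * Q)]

lemma main_one_side (A B : H →L[ℂ] H) (hA : IsSelfAdjoint A) (hB : IsSelfAdjoint B)
    (σ Δ : Set ℝ) (hσ : MeasurableSet σ) (hΔ : MeasurableSet Δ)
    (hdisj : Disjoint (convexHull ℝ σ) Δ)
    (EA EB : Set ℝ → H →L[ℂ] H) (hEA : IsSpectralMeasure A EA) (hEB : IsSpectralMeasure B EB) :
    sInf (Set.image2 dist σ Δ) * ‖EA σ * EB Δ‖ ≤ ‖A - B‖ := by
  rcases Δ.eq_empty_or_nonempty with rfl | hΔne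
  · rw [Set.image2_empty_right, Real.sInf_empty, zero_mul]
    exact norm_nonneg _
  set M := ‖A‖ + 1 with hM
  set σ₁ := σ ∩ {x : ℝ | |x| ≤ M} with hσ₁def
  set σ₂ := σ ∩ {x : ℝ | M < |x|} with hσ₂def
  have hmσ₁ : MeasurableSet σ₁ := hσ.inter (measurable_abs measurableSet_Iic)
  have hmσ₂ : MeasurableSet σ₂ := hσ.inter (measurable_abs measurableSet_Ioi)
  have hsplit : σ = σ₁ ∪ σ₂ := by
    ext x
    simp only [hσ₁def, hσ₂def, Set.mem_union, Set.mem_inter_iff, Set.mem_setOf_eq]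
    constructor
    · intro hx
      rcases le_or_gt |x| M with h | h
      · exact Or.inl ⟨hx, h⟩
      · exact Or.inr ⟨hx, h⟩
    · rintro (⟨hx, _⟩ | ⟨hx, _⟩) <;> exact hx
  have hdisj12 : Disjoint σ₁ σ₂ := by
    rw [Set.disjoint_left]
    rintro x ⟨_, h1⟩ ⟨_, h2⟩
    simp only [Set.mem_setOf_eq] at h1 h2
    linarith
  have hE2 : EA σ₂ = 0 := by
    apply ism_far hEA hmσ₂
    intro y hy
    exact le_of_lt hy.2
  have hEsplit : EA σ = EA σ₁ := by
    rw [hsplit, ism_union hEA hmσ₁ hmσ₂ hdisj12, hE2, add_zero]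
  rcases σ₁.eq_empty_or_nonempty with h1 | hσ₁ne
  · rw [hEsplit, h1, ism_empty hEA, zero_mul, norm_zero, mul_zero]
    exact norm_nonneg _
  have hbdd0 : ∀ x ∈ Set.image2 dist σ Δ, (0:ℝ) ≤ x := by
    rintro x ⟨u, hu, t, ht, rfl⟩; exact dist_nonneg
  have hsub : Set.image2 dist σ₁ Δ ⊆ Set.image2 dist σ Δ :=
    Set.image2_subset Set.inter_subset_left (subset_refl _)
  have hle : sInf (Set.image2 dist σ Δ) ≤ sInf (Set.image2 dist σ₁ Δ) :=
    csInf_le_csInf ⟨0, hbdd0⟩ (hσ₁ne.image2 hΔne) hsub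
  have hbddB : BddBelow σ₁ := by
    refine ⟨-M, fun y hy => ?_⟩
    have := hy.2
    simp only [Set.mem_setOf_eq] at this
    linarith [abs_le.mp this |>.1]
  have hbddA : BddAbove σ₁ := by
    refine ⟨M, fun y hy => ?_⟩
    have := hy.2
    simp only [Set.mem_setOf_eq] at this
    linarith [abs_le.mp this |>.2]
  have hdisj₁ : Disjoint (convexHull ℝ σ₁) Δ :=
    hdisj.mono_left (convexHull_mono Set.inter_subset_left)
  have hcore := core hA hB hmσ₁ hΔ hσ₁ne hΔne hbddB hbddA hdisj₁ hEA hEB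
  rw [hEsplit]
  calc sInf (Set.image2 dist σ Δ) * ‖EA σ₁ * EB Δ‖
      ≤ sInf (Set.image2 dist σ₁ Δ) * ‖EA σ₁ * EB Δ‖ :=
        mul_le_mul_of_nonneg_right hle (norm_nonneg _)
    _ ≤ ‖A - B‖ := hcore

end SpectralAux

/-- **Proposition (second part).** For bounded self-adjoint operators `A`, `B` and Borel
sets `σ`, `Δ` such that the convex hull of `σ` does not intersect `Δ` or the convex hull of
`Δ` does not intersect `σ`, one has `dist(σ, Δ) ‖E_A(σ) E_B(Δ)‖ ≤ ‖A − B‖`. -/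
theorem dist_mul_norm_proj_mul_proj_le_of_convexHull_disjoint
    {H : Type*} [NormedAddCommGroup H] [InnerProductSpace ℂ H] [CompleteSpace H]
    (A B : H →L[ℂ] H) (hA : IsSelfAdjoint A) (hB : IsSelfAdjoint B)
    (σ Δ : Set ℝ) (hσ : MeasurableSet σ) (hΔ : MeasurableSet Δ)
    (hconv : Disjoint (convexHull ℝ σ) Δ ∨ Disjoint (convexHull ℝ Δ) σ)
    (EA EB : Set ℝ → H →L[ℂ] H) (hEA : IsSpectralMeasure A EA) (hEB : IsSpectralMeasure B EB) :
    sInf (Set.image2 dist σ Δ) * ‖EA σ * EB Δ‖ ≤ ‖A - B‖ := by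
  rcases hconv with h | h
  · exact SpectralAux.main_one_side A B hA hB σ Δ hσ hΔ h EA EB hEA hEB
  · have h1 := SpectralAux.main_one_side B A hB hA Δ σ hΔ hσ h EB EA hEB hEA
    have h2 : Set.image2 dist Δ σ = Set.image2 dist σ Δ := by
      rw [Set.image2_swap]
      simp only [dist_comm]
    have hPsa := hEA.isSelfAdjoint σ hσ
    have hQsa := hEB.isSelfAdjoint Δ hΔ
    have h3 : ‖EB Δ * EA σ‖ = ‖EA σ * EB Δ‖ := by
      rw [show EB Δ * EA σ = star (EA σ * EB Δ) by
        rw [star_mul, hPsa.star_eq, hQsa.star_eq], norm_star]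
    rw [h2, h3, norm_sub_rev B A] at h1
    exact h1
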